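/- Let 0 < β < 1 satisfy Σ_{n=1}^{∞} β^n < 2, and define f : ℓ∞(ℕ) → ℝ by f(x) = limsup_{n→∞} |x_n| + Σ_{n=1}^{∞} β^n (x_n² − x_n/n). Then f is a convex continuous function on ℓ∞(ℕ), its directional derivative in the direction of the n-th unit vector e_n at any point x is f'(x; e_n) = β^n (2 x_n − 1/n), and the point x* = (1/(2n))_{n≥1} satisfies f(x*) = inf_{x ∈ ℓ∞(ℕ)} f(x). -/

import Mathlib

open Filter Topology ENNReal
set_option synthInstance.maxHeartbeats 1000000
set_option maxHeartbeats 1000000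

private lemma coord_abs_le (x : lp (fun _ : ℕ => ℝ) ∞) (n : ℕ) : |x n| ≤ ‖x‖ := by
  simpa using lp.norm_apply_le_norm ENNReal.top_ne_zero x n

private lemma bdd_of (u : ℕ → ℝ) (C : ℝ) (h : ∀ n, u n ≤ C) :
    IsBoundedUnder (· ≤ ·) atTop u := isBoundedUnder_of ⟨C, h⟩

private lemma cbdd_of (u : ℕ → ℝ) (C : ℝ) (h : ∀ n, C ≤ u n) :
    IsCoboundedUnder (· ≤ ·) atTop u :=
  (isBoundedUnder_of ⟨C, h⟩ : IsBoundedUnder (· ≥ ·) atTop u).isCoboundedUnder_le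

private lemma bddU (x : lp (fun _ : ℕ => ℝ) ∞) :
    IsBoundedUnder (· ≤ ·) atTop (fun n => |x n|) :=
  bdd_of _ ‖x‖ (coord_abs_le x)

private lemma cbddU (x : lp (fun _ : ℕ => ℝ) ∞) :
    IsCoboundedUnder (· ≤ ·) atTop (fun n => |x n|) :=
  cbdd_of _ 0 fun n => abs_nonneg _

private lemma limsup_cmul (c : ℝ) (hc : 0 ≤ c) (u : ℕ → ℝ)
    (hb : IsBoundedUnder (· ≤ ·) atTop u) (hcb : IsCoboundedUnder (· ≤ ·) atTop u) :
    limsup (fun n => c * u n) atTop = c * limsup u atTop := by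
  have hm : Monotone (fun r : ℝ => c * r) := fun a b hab => mul_le_mul_of_nonneg_left hab hc
  simpa [Function.comp_def] using
    (hm.map_limsup_of_continuousAt u (continuous_const.mul continuous_id).continuousAt hb hcb).symm

private lemma hgeom {β : ℝ} (hβ0 : 0 < β) (hβ1 : β < 1) :
    Summable (fun n : ℕ => β ^ (n + 1)) := by
  simpa [pow_succ] using (summable_geometric_of_lt_one hβ0.le hβ1).mul_right β

private lemma sumAux {β : ℝ} (hβ0 : 0 < β) (hβ1 : β < 1) (c : ℕ → ℝ) (C : ℝ)
    (hC : ∀ n, |c n| ≤ C) : Summable (fun n : ℕ => β ^ (n + 1) * c n) := by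
  refine Summable.of_norm_bounded ((hgeom hβ0 hβ1).mul_right C) ?_
  intro n
  rw [Real.norm_eq_abs, abs_mul, abs_of_nonneg (pow_nonneg hβ0.le _)]
  exact mul_le_mul_of_nonneg_left (hC n) (pow_nonneg hβ0.le _)

private lemma coefBound (x : lp (fun _ : ℕ => ℝ) ∞) (n : ℕ) :
    |(x n)^2 - x n / ((n:ℝ)+1)| ≤ ‖x‖^2 + ‖x‖ := by
  have h1 := coord_abs_le x n
  have h2 : (1:ℝ) ≤ (n:ℝ) + 1 := by have := Nat.cast_nonneg (α:=ℝ) n; linarith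
  have h3 : |x n / ((n:ℝ)+1)| ≤ |x n| := by
    rw [abs_div, abs_of_pos (by positivity : (0:ℝ) < (n:ℝ)+1)]
    exact div_le_self (abs_nonneg _) h2
  have h4 : |(x n)^2| ≤ ‖x‖^2 := by
    rw [abs_of_nonneg (sq_nonneg _), ← sq_abs]
    exact pow_le_pow_left₀ (abs_nonneg _) h1 2
  calc |(x n)^2 - x n / ((n:ℝ)+1)| ≤ |(x n)^2| + |x n / ((n:ℝ)+1)| := abs_sub _ _
    _ ≤ ‖x‖^2 + ‖x‖ := add_le_add h4 (h3.trans h1)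

private lemma H1 {β : ℝ} (hβ0 : 0 < β) (hβ1 : β < 1) (x : lp (fun _ : ℕ => ℝ) ∞) :
    Summable (fun n : ℕ => β ^ (n + 1) * ((x n)^2 - x n / ((n:ℝ)+1))) :=
  sumAux hβ0 hβ1 _ (‖x‖^2 + ‖x‖) (coefBound x)

private lemma g_lip (x y : lp (fun _ : ℕ => ℝ) ∞) :
    limsup (fun n : ℕ => |x n|) atTop ≤ limsup (fun n : ℕ => |y n|) atTop + ‖x - y‖ := by
  have h1 : ∀ n, |x n| ≤ |y n| + ‖x - y‖ := by
    intro n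
    have h2 := coord_abs_le (x - y) n
    have h3 : (x - y) n = x n - y n := by rw [lp.coeFn_sub]; rfl
    rw [h3] at h2
    have := abs_sub_abs_le_abs_sub (x n) (y n)
    linarith
  calc limsup (fun n : ℕ => |x n|) atTop
      ≤ limsup (fun n : ℕ => |y n| + ‖x - y‖) atTop :=
        limsup_le_limsup (Eventually.of_forall h1) (cbddU x)
          (bdd_of _ (‖y‖ + ‖x - y‖) fun n => add_le_add (coord_abs_le y n) le_rfl)
    _ = limsup (fun n : ℕ => |y n|) atTop + ‖x - y‖ :=
        limsup_add_const atTop _ _ (bddU y) (cbddU y)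
private lemma key_lip {β : ℝ} (hβ0 : 0 < β) (hβ1 : β < 1) (x y : lp (fun _ : ℕ => ℝ) ∞) :
    |(limsup (fun n : ℕ => |x n|) atTop + ∑' n : ℕ, β ^ (n+1) * ((x n)^2 - x n / ((n:ℝ)+1))) -
     (limsup (fun n : ℕ => |y n|) atTop + ∑' n : ℕ, β ^ (n+1) * ((y n)^2 - y n / ((n:ℝ)+1)))| ≤
    (1 + (∑' n : ℕ, β ^ (n+1)) * (‖x‖ + ‖y‖ + 1)) * ‖x - y‖ := by
  have hd : ∀ n, |x n - y n| ≤ ‖x - y‖ := by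
    intro n
    have h2 := coord_abs_le (x - y) n
    have h3 : (x - y) n = x n - y n := by rw [lp.coeFn_sub]; rfl
    rwa [h3] at h2
  have hg : |limsup (fun n : ℕ => |x n|) atTop - limsup (fun n : ℕ => |y n|) atTop| ≤ ‖x - y‖ := by
    rw [abs_sub_le_iff]
    constructor
    · have := g_lip x y; linarith
    · have := g_lip y x; rw [norm_sub_rev] at this; linarith
  have hsx := H1 hβ0 hβ1 x
  have hsy := H1 hβ0 hβ1 y
  have hssub := hsx.sub hsy
  have hbound : ∀ n : ℕ,
      |β ^ (n+1) * ((x n)^2 - x n/((n:ℝ)+1)) - β ^ (n+1) * ((y n)^2 - y n/((n:ℝ)+1))|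
      ≤ β ^ (n+1) * ((‖x‖ + ‖y‖ + 1) * ‖x - y‖) := by
    intro n
    have hP : (0:ℝ) ≤ β ^ (n+1) := pow_nonneg hβ0.le _
    have e1 : β ^ (n+1) * ((x n)^2 - x n/((n:ℝ)+1)) - β ^ (n+1) * ((y n)^2 - y n/((n:ℝ)+1))
        = β ^ (n+1) * ((x n + y n) * (x n - y n) - (x n - y n)/((n:ℝ)+1)) := by ring
    rw [e1, abs_mul, abs_of_nonneg hP]
    refine mul_le_mul_of_nonneg_left ?_ hP
    have h3 : |(x n + y n) * (x n - y n)| ≤ (‖x‖ + ‖y‖) * ‖x - y‖ := by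
      rw [abs_mul]
      exact mul_le_mul ((abs_add_le _ _).trans (add_le_add (coord_abs_le x n) (coord_abs_le y n)))
        (hd n) (abs_nonneg _) (by positivity)
    have h4 : |(x n - y n)/((n:ℝ)+1)| ≤ ‖x - y‖ := by
      rw [abs_div, abs_of_pos (by positivity : (0:ℝ) < (n:ℝ)+1)]
      exact (div_le_self (abs_nonneg _)
        (by have := Nat.cast_nonneg (α:=ℝ) n; linarith)).trans (hd n)
    calc |(x n + y n) * (x n - y n) - (x n - y n)/((n:ℝ)+1)|
        ≤ |(x n + y n) * (x n - y n)| + |(x n - y n)/((n:ℝ)+1)| := abs_sub _ _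
      _ ≤ (‖x‖ + ‖y‖) * ‖x - y‖ + ‖x - y‖ := add_le_add h3 h4
      _ = (‖x‖ + ‖y‖ + 1) * ‖x - y‖ := by ring
  have hs : |(∑' n : ℕ, β ^ (n+1) * ((x n)^2 - x n/((n:ℝ)+1))) -
      (∑' n : ℕ, β ^ (n+1) * ((y n)^2 - y n/((n:ℝ)+1)))| ≤
      (∑' n : ℕ, β ^ (n+1)) * ((‖x‖ + ‖y‖ + 1) * ‖x - y‖) := by
    rw [← hsx.tsum_sub hsy]
    calc |∑' n : ℕ, (β ^ (n+1) * ((x n)^2 - x n/((n:ℝ)+1)) -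
            β ^ (n+1) * ((y n)^2 - y n/((n:ℝ)+1)))|
        ≤ ∑' n : ℕ, |β ^ (n+1) * ((x n)^2 - x n/((n:ℝ)+1)) -
            β ^ (n+1) * ((y n)^2 - y n/((n:ℝ)+1))| := by
          simpa [Real.norm_eq_abs] using norm_tsum_le_tsum_norm hssub.norm
      _ ≤ ∑' n : ℕ, β ^ (n+1) * ((‖x‖ + ‖y‖ + 1) * ‖x - y‖) :=
          Summable.tsum_le_tsum hbound hssub.abs ((hgeom hβ0 hβ1).mul_right _)
      _ = (∑' n : ℕ, β ^ (n+1)) * ((‖x‖ + ‖y‖ + 1) * ‖x - y‖) :=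
          (hgeom hβ0 hβ1).tsum_mul_right _
  have e : (limsup (fun n : ℕ => |x n|) atTop + ∑' n : ℕ, β ^ (n+1) * ((x n)^2 - x n / ((n:ℝ)+1))) -
      (limsup (fun n : ℕ => |y n|) atTop + ∑' n : ℕ, β ^ (n+1) * ((y n)^2 - y n / ((n:ℝ)+1)))
      = (limsup (fun n : ℕ => |x n|) atTop - limsup (fun n : ℕ => |y n|) atTop) +
        ((∑' n : ℕ, β ^ (n+1) * ((x n)^2 - x n / ((n:ℝ)+1))) -
         (∑' n : ℕ, β ^ (n+1) * ((y n)^2 - y n / ((n:ℝ)+1)))) := by ring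
  rw [e]
  calc _ ≤ _ := abs_add_le _ _
    _ ≤ ‖x - y‖ + (∑' n : ℕ, β ^ (n+1)) * ((‖x‖ + ‖y‖ + 1) * ‖x - y‖) := add_le_add hg hs
    _ = (1 + (∑' n : ℕ, β ^ (n+1)) * (‖x‖ + ‖y‖ + 1)) * ‖x - y‖ := by ring
theorem statement12 (β : ℝ) (hβ0 : 0 < β) (hβ1 : β < 1)
    (hβ2 : ∑' n : ℕ, β ^ (n + 1) < 2)
    (f : lp (fun _ : ℕ => ℝ) ∞ → ℝ)
    (hf : ∀ x : lp (fun _ : ℕ => ℝ) ∞,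
      f x = Filter.limsup (fun n : ℕ => |x n|) atTop +
        ∑' n : ℕ, β ^ (n + 1) * ((x n) ^ 2 - x n / ((n : ℝ) + 1)))
    (xs : lp (fun _ : ℕ => ℝ) ∞)
    (hxs : ∀ n : ℕ, xs n = 1 / (2 * ((n : ℝ) + 1))) :
    ConvexOn ℝ Set.univ f ∧ Continuous f ∧
    (∀ (x : lp (fun _ : ℕ => ℝ) ∞) (n : ℕ),
      Tendsto (fun t : ℝ => (f (x + t • lp.single ∞ n (1 : ℝ)) - f x) / t)
        (𝓝[≠] (0 : ℝ)) (𝓝 (β ^ (n + 1) * (2 * x n - 1 / ((n : ℝ) + 1))))) ∧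
    IsLeast (Set.range f) (f xs) := by
  have hS0 : 0 ≤ ∑' n : ℕ, β ^ (n + 1) := tsum_nonneg fun n => pow_nonneg hβ0.le _
  have hconv : ConvexOn ℝ Set.univ f := by
    refine ⟨convex_univ, fun x _ y _ a b ha hb hab => ?_⟩
    rw [smul_eq_mul, smul_eq_mul, hf, hf, hf]
    have hco : ∀ m : ℕ, (a • x + b • y) m = a * x m + b * y m := by
      intro m
      rw [lp.coeFn_add, Pi.add_apply, lp.coeFn_smul, lp.coeFn_smul]
      rfl
    have hls : limsup (fun m : ℕ => |(a • x + b • y) m|) atTop ≤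
        a * limsup (fun m : ℕ => |x m|) atTop + b * limsup (fun m : ℕ => |y m|) atTop := by
      have step1 : limsup (fun m : ℕ => |(a • x + b • y) m|) atTop ≤
          limsup (fun m : ℕ => a * |x m| + b * |y m|) atTop := by
        refine limsup_le_limsup (Eventually.of_forall ?_) (cbddU _)
          (bdd_of _ (a * ‖x‖ + b * ‖y‖) ?_)
        · intro m; dsimp only; rw [hco m]
          calc |a * x m + b * y m| ≤ |a * x m| + |b * y m| := abs_add_le _ _
            _ = a * |x m| + b * |y m| := by
                rw [abs_mul, abs_mul, abs_of_nonneg ha, abs_of_nonneg hb]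
        · intro m
          exact add_le_add (mul_le_mul_of_nonneg_left (coord_abs_le x m) ha)
            (mul_le_mul_of_nonneg_left (coord_abs_le y m) hb)
      have step2 : limsup (fun m : ℕ => a * |x m| + b * |y m|) atTop ≤
          limsup (fun m : ℕ => a * |x m|) atTop + limsup (fun m : ℕ => b * |y m|) atTop := by
        have e : (fun m : ℕ => a * |x m| + b * |y m|) =
            (fun m : ℕ => a * |x m|) + (fun m : ℕ => b * |y m|) := rfl
        rw [e]
        exact limsup_add_le
          (isBoundedUnder_of ⟨0, fun m => mul_nonneg ha (abs_nonneg _)⟩)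
          (bdd_of _ (a * ‖x‖) fun m => mul_le_mul_of_nonneg_left (coord_abs_le x m) ha)
          (cbdd_of _ 0 fun m => mul_nonneg hb (abs_nonneg _))
          (bdd_of _ (b * ‖y‖) fun m => mul_le_mul_of_nonneg_left (coord_abs_le y m) hb)
      have e1 := limsup_cmul a ha (fun m : ℕ => |x m|) (bddU x) (cbddU x)
      have e2 := limsup_cmul b hb (fun m : ℕ => |y m|) (bddU y) (cbddU y)
      rw [e1, e2] at step2
      exact step1.trans step2
    have hterm : ∀ m : ℕ,
        β ^ (m + 1) * (((a • x + b • y) m) ^ 2 - (a • x + b • y) m / ((m : ℝ) + 1)) ≤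
        a * (β ^ (m + 1) * ((x m) ^ 2 - x m / ((m : ℝ) + 1))) +
        b * (β ^ (m + 1) * ((y m) ^ 2 - y m / ((m : ℝ) + 1))) := by
      intro m
      rw [hco m]
      have hkey : (a * x m + b * y m) ^ 2 ≤ a * (x m) ^ 2 + b * (y m) ^ 2 := by
        nlinarith [sq_nonneg (x m - y m), mul_nonneg ha hb]
      have hP : (0:ℝ) ≤ β ^ (m + 1) := pow_nonneg hβ0.le _
      have := mul_le_mul_of_nonneg_left hkey hP
      have hdiv : β ^ (m+1) * ((a * x m + b * y m) / ((m:ℝ)+1)) =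
          a * (β ^ (m+1) * (x m / ((m:ℝ)+1))) + b * (β ^ (m+1) * (y m / ((m:ℝ)+1))) := by
        ring
      nlinarith [this]
    have hsum : (∑' m : ℕ,
        β ^ (m + 1) * (((a • x + b • y) m) ^ 2 - (a • x + b • y) m / ((m : ℝ) + 1))) ≤
        a * (∑' m : ℕ, β ^ (m + 1) * ((x m) ^ 2 - x m / ((m : ℝ) + 1))) +
        b * (∑' m : ℕ, β ^ (m + 1) * ((y m) ^ 2 - y m / ((m : ℝ) + 1))) := by
      have hsx := H1 hβ0 hβ1 x
      have hsy := H1 hβ0 hβ1 y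
      calc (∑' m : ℕ, β ^ (m + 1) * (((a • x + b • y) m) ^ 2 - (a • x + b • y) m / ((m : ℝ) + 1)))
          ≤ ∑' m : ℕ, (a * (β ^ (m + 1) * ((x m) ^ 2 - x m / ((m : ℝ) + 1))) +
              b * (β ^ (m + 1) * ((y m) ^ 2 - y m / ((m : ℝ) + 1)))) :=
            Summable.tsum_le_tsum hterm (H1 hβ0 hβ1 _) ((hsx.mul_left a).add (hsy.mul_left b))
        _ = a * (∑' m : ℕ, β ^ (m + 1) * ((x m) ^ 2 - x m / ((m : ℝ) + 1))) +
            b * (∑' m : ℕ, β ^ (m + 1) * ((y m) ^ 2 - y m / ((m : ℝ) + 1))) := by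
            rw [Summable.tsum_add (hsx.mul_left a) (hsy.mul_left b),
              hsx.tsum_mul_left a, hsy.tsum_mul_left b]
    linarith
  have hcont : Continuous f := by
    rw [continuous_iff_continuousAt]
    intro x₀
    rw [Metric.continuousAt_iff]
    intro ε hε
    have hK1 : (1:ℝ) ≤ 1 + (∑' n : ℕ, β ^ (n+1)) * (2 * ‖x₀‖ + 2) := by
      nlinarith [norm_nonneg x₀, hS0]
    have hK0 : (0:ℝ) < 1 + (∑' n : ℕ, β ^ (n+1)) * (2 * ‖x₀‖ + 2) := by linarith
    refine ⟨min 1 (ε / (1 + (∑' n : ℕ, β ^ (n+1)) * (2 * ‖x₀‖ + 2))),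
      lt_min one_pos (div_pos hε hK0), fun {y} hy => ?_⟩
    rw [Real.dist_eq, hf y, hf x₀]
    rw [dist_eq_norm] at hy
    have h1 : ‖y - x₀‖ < 1 := lt_of_lt_of_le hy (min_le_left _ _)
    have h2 : ‖y - x₀‖ < ε / (1 + (∑' n : ℕ, β ^ (n+1)) * (2 * ‖x₀‖ + 2)) :=
      lt_of_lt_of_le hy (min_le_right _ _)
    have hyn : ‖y‖ ≤ ‖x₀‖ + 1 := by
      have := norm_sub_norm_le y x₀; linarith
    have hkl := key_lip hβ0 hβ1 y x₀
    have hcoef : 1 + (∑' n : ℕ, β ^ (n+1)) * (‖y‖ + ‖x₀‖ + 1)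
        ≤ 1 + (∑' n : ℕ, β ^ (n+1)) * (2 * ‖x₀‖ + 2) := by nlinarith [hS0]
    have hfin := le_trans hkl (mul_le_mul_of_nonneg_right hcoef (norm_nonneg (y - x₀)))
    refine lt_of_le_of_lt hfin ?_
    rw [mul_comm]
    exact (lt_div_iff₀ hK0).mp h2
  have hderiv : ∀ (x : lp (fun _ : ℕ => ℝ) ∞) (n : ℕ),
      Tendsto (fun t : ℝ => (f (x + t • lp.single ∞ n (1 : ℝ)) - f x) / t)
        (𝓝[≠] (0 : ℝ)) (𝓝 (β ^ (n + 1) * (2 * x n - 1 / ((n : ℝ) + 1)))) := by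
    intro x n
    have hquot : ∀ t : ℝ, t ≠ 0 →
        (f (x + t • lp.single ∞ n (1 : ℝ)) - f x) / t
          = β ^ (n + 1) * (2 * x n + t - 1 / ((n : ℝ) + 1)) := by
      intro t ht
      set z : lp (fun _ : ℕ => ℝ) ∞ := x + t • lp.single ∞ n (1 : ℝ) with hzdef
      have hcz : ∀ m : ℕ, z m = x m + (if m = n then t else 0) := by
        intro m
        rw [hzdef, lp.coeFn_add, Pi.add_apply, lp.coeFn_smul, Pi.smul_apply]
        by_cases hm : m = n
        · subst hm; rw [lp.single_apply_self]; simp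
        · rw [lp.single_apply_ne _ _ _ hm, if_neg hm]; simp
      have hlim : limsup (fun m : ℕ => |z m|) atTop
          = limsup (fun m : ℕ => |x m|) atTop := by
        apply limsup_congr
        filter_upwards [eventually_gt_atTop n] with m hm
        rw [hcz m, if_neg (by omega), add_zero]
      have hz := H1 hβ0 hβ1 z
      have hx' := H1 hβ0 hβ1 x
      have hdiff : (∑' m : ℕ, (β ^ (m + 1) * ((z m) ^ 2 - z m / ((m : ℝ) + 1))
          - β ^ (m + 1) * ((x m) ^ 2 - x m / ((m : ℝ) + 1))))
          = t * (β ^ (n + 1) * (2 * x n + t - 1 / ((n : ℝ) + 1))) := by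
        rw [tsum_eq_single n (fun m hm => by rw [hcz m, if_neg hm, add_zero, sub_self])]
        rw [hcz n, if_pos rfl]
        have hne : ((n:ℝ) + 1) ≠ 0 := by positivity
        field_simp
        ring
      have hts := hz.tsum_sub hx'
      rw [hdiff] at hts
      have hfs : f z - f x = t * (β ^ (n + 1) * (2 * x n + t - 1 / ((n : ℝ) + 1))) := by
        rw [hf z, hf x, hlim]
        linarith [hts]
      rw [hfs, mul_comm t _, mul_div_assoc, div_self ht, mul_one]
    have hcontt : Tendsto (fun t : ℝ => β ^ (n + 1) * (2 * x n + t - 1 / ((n : ℝ) + 1)))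
        (𝓝[≠] (0 : ℝ)) (𝓝 (β ^ (n + 1) * (2 * x n - 1 / ((n : ℝ) + 1)))) := by
      have hc2 : Continuous (fun t : ℝ => β ^ (n + 1) * (2 * x n + t - 1 / ((n : ℝ) + 1))) := by
        continuity
      have h0 : Tendsto (fun t : ℝ => β ^ (n + 1) * (2 * x n + t - 1 / ((n : ℝ) + 1)))
          (𝓝 0) (𝓝 (β ^ (n + 1) * (2 * x n + 0 - 1 / ((n : ℝ) + 1)))) := hc2.tendsto 0
      rw [add_zero] at h0
      exact h0.mono_left nhdsWithin_le_nhds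
    refine Tendsto.congr' ?_ hcontt
    filter_upwards [self_mem_nhdsWithin] with t ht
    exact (hquot t ht).symm
  have hmin : ∀ x : lp (fun _ : ℕ => ℝ) ∞, f xs ≤ f x := by
    intro x
    have hlim0 : limsup (fun n : ℕ => |xs n|) atTop = 0 := by
      have ht : Tendsto (fun n : ℕ => |xs n|) atTop (𝓝 0) := by
        have h2 : Tendsto (fun n : ℕ => 2 * ((n:ℝ) + 1)) atTop atTop := by
          apply Tendsto.const_mul_atTop two_pos
          exact tendsto_atTop_add_const_right _ 1 tendsto_natCast_atTop_atTop
        have h3 := h2.inv_tendsto_atTop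
        apply h3.congr
        intro n
        simp only [Pi.inv_apply]
        rw [hxs n, abs_of_pos (by positivity : (0:ℝ) < 1 / (2 * ((n:ℝ) + 1))), one_div]
      exact ht.limsup_eq
    have hfxs : f xs = ∑' n : ℕ, -(β ^ (n + 1) * (1 / (2 * ((n : ℝ) + 1))) ^ 2) := by
      rw [hf xs, hlim0, zero_add]
      apply tsum_congr
      intro n
      rw [hxs n]
      have hne : ((n:ℝ) + 1) ≠ 0 := by positivity
      field_simp
      ring
    have habound : ∀ n : ℕ, |(1 / (2 * ((n : ℝ) + 1))) ^ 2| ≤ 1 := by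
      intro n
      have h1 : (0:ℝ) < (n:ℝ) + 1 := by positivity
      have h2 : 1 / (2 * ((n:ℝ) + 1)) ≤ 1 := by
        rw [div_le_one (by positivity)]; linarith
      rw [abs_of_nonneg (sq_nonneg _)]
      nlinarith [le_of_lt (div_pos one_pos (by positivity : (0:ℝ) < 2 * ((n:ℝ)+1)))]
    have hneg : Summable (fun n : ℕ => -(β ^ (n + 1) * (1 / (2 * ((n : ℝ) + 1))) ^ 2)) :=
      (sumAux hβ0 hβ1 (fun n => (1 / (2 * ((n : ℝ) + 1))) ^ 2) 1 habound).neg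
    have hsq : Summable (fun n : ℕ => β ^ (n + 1) * (x n - 1 / (2 * ((n : ℝ) + 1))) ^ 2) := by
      apply sumAux hβ0 hβ1 _ ((‖x‖ + 1) ^ 2)
      intro n
      have h1 : (0:ℝ) < (n:ℝ) + 1 := by positivity
      have h2 : (0:ℝ) < 1 / (2 * ((n:ℝ) + 1)) := by positivity
      have h3 : 1 / (2 * ((n:ℝ) + 1)) ≤ 1 := by
        rw [div_le_one (by positivity)]; linarith
      have h4 : |x n - 1 / (2 * ((n:ℝ) + 1))| ≤ ‖x‖ + 1 := by
        have := coord_abs_le x n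
        have h5 : |x n - 1 / (2 * ((n:ℝ) + 1))| ≤ |x n| + |1 / (2 * ((n:ℝ) + 1))| := abs_sub _ _
        rw [abs_of_pos h2] at h5
        linarith
      rw [abs_of_nonneg (sq_nonneg _), ← sq_abs]
      exact pow_le_pow_left₀ (abs_nonneg _) h4 2
    have hsplit : (∑' n : ℕ, β ^ (n + 1) * ((x n) ^ 2 - x n / ((n : ℝ) + 1)))
        = (∑' n : ℕ, β ^ (n + 1) * (x n - 1 / (2 * ((n : ℝ) + 1))) ^ 2)
          + ∑' n : ℕ, -(β ^ (n + 1) * (1 / (2 * ((n : ℝ) + 1))) ^ 2) := by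
      rw [← hsq.tsum_add hneg]
      apply tsum_congr
      intro n
      have hne : ((n:ℝ) + 1) ≠ 0 := by positivity
      field_simp
      ring
    have hls0 : 0 ≤ limsup (fun n : ℕ => |x n|) atTop :=
      le_limsup_of_frequently_le
        ((Eventually.of_forall fun n => abs_nonneg (x n)).frequently) (bddU x)
    have hsq0 : 0 ≤ ∑' n : ℕ, β ^ (n + 1) * (x n - 1 / (2 * ((n : ℝ) + 1))) ^ 2 :=
      tsum_nonneg fun n => by positivity
    rw [hf x, hsplit, hfxs]
    linarith
  exact ⟨hconv, hcont, hderiv,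
    ⟨Set.mem_range_self xs, by rintro y ⟨x, rfl⟩; exact hmin x⟩⟩
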